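/- Let X be a real vector space, let ρ : X → ℝ be convex, and let λ, γ > 0. For every η ∈ X, the infimum over ξ ∈ X of λ·ρ((η − ξ)/λ) + γ·ρ(ξ/γ) is attained at ξ* = (γ/(γ + λ))·η, and the minimum value equals (λ + γ)·ρ(η/(λ + γ)). That is, ξ* = (γ/(γ+λ))η is an optimal value for the problem of minimizing ρ_λ(η − ξ) + ρ_γ(ξ) over ξ ∈ X, and ρ_λ □ ρ_γ(η) = ρ_{λ+γ}(η). -/

import Mathlib

/-- Theorem 3.4 (abstract content): for a convex ρ and λ, γ > 0, the infimum of
ρ_λ(η - ξ) + ρ_γ(ξ) over ξ is attained at ξ* = (γ/(γ+λ))·η and equals ρ_{λ+γ}(η). -/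
theorem stmt_4 {X : Type*} [AddCommGroup X] [Module ℝ X]
    (ρ : X → ℝ)
    (hconv : ∀ x y : X, ∀ a : ℝ, a ∈ Set.Icc (0 : ℝ) 1 →
      ρ (a • x + (1 - a) • y) ≤ a * ρ x + (1 - a) * ρ y)
    (lam gam : ℝ) (hlam : 0 < lam) (hgam : 0 < gam) (η : X) :
    lam * ρ (lam⁻¹ • (η - (gam / (gam + lam)) • η)) +
        gam * ρ (gam⁻¹ • ((gam / (gam + lam)) • η))
      = (lam + gam) * ρ ((lam + gam)⁻¹ • η) ∧
    ∀ ξ : X, (lam + gam) * ρ ((lam + gam)⁻¹ • η) ≤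
      lam * ρ (lam⁻¹ • (η - ξ)) + gam * ρ (gam⁻¹ • ξ) := by
  have hs : (0 : ℝ) < lam + gam := by linarith
  have h1 : lam⁻¹ • (η - (gam / (gam + lam)) • η) = (lam + gam)⁻¹ • η := by
    rw [smul_sub]
    nth_rewrite 1 [← one_smul ℝ η]
    rw [smul_smul, smul_smul, ← sub_smul]
    congr 1
    field_simp
    ring
  have h2 : gam⁻¹ • ((gam / (gam + lam)) • η) = (lam + gam)⁻¹ • η := by
    rw [smul_smul]
    congr 1
    field_simp
    ring
  constructor
  · rw [h1, h2]; ring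
  · intro ξ
    have ha : lam / (lam + gam) ∈ Set.Icc (0 : ℝ) 1 := by
      constructor
      · positivity
      · rw [div_le_one hs]; linarith
    have key := hconv (lam⁻¹ • (η - ξ)) (gam⁻¹ • ξ) (lam / (lam + gam)) ha
    have h3 : (lam / (lam + gam)) • (lam⁻¹ • (η - ξ)) +
        (1 - lam / (lam + gam)) • (gam⁻¹ • ξ) = (lam + gam)⁻¹ • η := by
      have h4 : (1 : ℝ) - lam / (lam + gam) = gam / (lam + gam) := by
        field_simp
        ring
      rw [h4, smul_smul, smul_smul]
      have : lam / (lam + gam) * lam⁻¹ = (lam + gam)⁻¹ := by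
        field_simp
      rw [this]
      have : gam / (lam + gam) * gam⁻¹ = (lam + gam)⁻¹ := by
        field_simp
      rw [this, smul_sub, sub_add_cancel]
    rw [h3] at key
    have := mul_le_mul_of_nonneg_left key hs.le
    calc (lam + gam) * ρ ((lam + gam)⁻¹ • η)
        ≤ (lam + gam) * (lam / (lam + gam) * ρ (lam⁻¹ • (η - ξ)) +
            (1 - lam / (lam + gam)) * ρ (gam⁻¹ • ξ)) := this
      _ = lam * ρ (lam⁻¹ • (η - ξ)) + gam * ρ (gam⁻¹ • ξ) := by
          field_simp
          ring
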